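/- For independent nonnegative random variables γ_s and γ_e with CDFs F_s, F_e (γ_s having a density f_s), the expectation E[max(0, log₂((1+γ_s)/(1+γ_e)))] equals (1/ln 2) ∫₀^∞ F_e(x)(1 − F_s(x))/(1+x) dx. -/

import Mathlib

open MeasureTheory ProbabilityTheory Real

lemma pointwise_lintegral (e s : ℝ) (he : 0 ≤ e) (hs : 0 ≤ s) :
    ∫⁻ x in Set.Ioi (0:ℝ), (Set.Ico e s).indicator
        (fun x => ENNReal.ofReal (1/(1+x))) x
      = ENNReal.ofReal (max 0 (Real.log (1+s) - Real.log (1+e))) := by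
  rw [lintegral_indicator measurableSet_Ico,
    Measure.restrict_restrict measurableSet_Ico]
  rcases le_or_gt s e with h | h
  · rw [Set.Ico_eq_empty (not_lt.2 h)]
    simp only [Set.empty_inter, Measure.restrict_empty, lintegral_zero_measure]
    rw [max_eq_left (by
      have := Real.log_le_log (by linarith) (by linarith : 1 + s ≤ 1 + e)
      linarith)]
    simp
  · have hae : (Set.Ico e s ∩ Set.Ioi 0 : Set ℝ) =ᵐ[volume] Set.Ioc e s := by
      have h1 : ∀ᵐ x : ℝ ∂volume, x ≠ e := by
        rw [ae_iff]; simpa using measure_singleton e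
      have h2 : ∀ᵐ x : ℝ ∂volume, x ≠ s := by
        rw [ae_iff]; simpa using measure_singleton s
      filter_upwards [h1, h2] with x hx1 hx2
      simp only [Set.mem_inter_iff, Set.mem_Ico, Set.mem_Ioi, Set.mem_Ioc,
        eq_iff_iff]
      constructor
      · rintro ⟨⟨hex, hxs⟩, _⟩
        exact ⟨lt_of_le_of_ne hex (Ne.symm hx1), hxs.le⟩
      · rintro ⟨hex, hxs⟩
        exact ⟨⟨hex.le, lt_of_le_of_ne hxs hx2⟩, lt_of_le_of_lt he hex⟩
    rw [setLIntegral_congr hae]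
    have hint : IntegrableOn (fun x => 1/(1+x)) (Set.Ioc e s) := by
      have hc : ContinuousOn (fun x : ℝ => 1/(1+x)) (Set.Icc e s) := by
        apply ContinuousOn.div continuousOn_const (by fun_prop)
        intro x hx; have := hx.1; intro hfalse; linarith
      exact (hc.integrableOn_Icc).mono_set Set.Ioc_subset_Icc_self
    rw [← ofReal_integral_eq_lintegral_ofReal hint
      ((ae_restrict_iff' measurableSet_Ioc).2 (ae_of_all _ fun x hx => by
        have h1x : (0:ℝ) < 1 + x := by have := hx.1; linarith
        positivity))]
    congr 1
    rw [← intervalIntegral.integral_of_le h.le]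
    have : ∫ x in e..s, 1/(1+x) = ∫ x in (1+e)..(1+s), 1/x := by
      simpa using intervalIntegral.integral_comp_add_left (a := e) (b := s)
        (fun x => 1/x) 1
    rw [this]
    simp only [one_div]
    rw [integral_inv_of_pos (by linarith) (by linarith),
      Real.log_div (by linarith) (by linarith),
      max_eq_right (by
        have := Real.log_le_log (by linarith) (by linarith : 1 + e ≤ 1 + s)
        linarith)]

theorem ergodic_secrecy_capacity_formula
    {Ω : Type*} [MeasurableSpace Ω] (P : Measure Ω) [IsProbabilityMeasure P]
    (γs γe : Ω → ℝ) (hγs : Measurable γs) (hγe : Measurable γe)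
    (hγs0 : ∀ ω, 0 ≤ γs ω) (hγe0 : ∀ ω, 0 ≤ γe ω)
    (hindep : IndepFun γs γe P)
    (fs : ℝ → ℝ) (hfs0 : ∀ x, 0 ≤ fs x)
    (hdens : Measure.map γs P = volume.withDensity (fun x => ENNReal.ofReal (fs x))) :
    ∫ ω, max 0 (Real.logb 2 ((1 + γs ω) / (1 + γe ω))) ∂P
      = (1 / Real.log 2) *
        ∫ x in Set.Ioi (0:ℝ),
          (P {ω | γe ω ≤ x}).toReal * (1 - (P {ω | γs ω ≤ x}).toReal) / (1 + x) := by
  have hlog2 : (0:ℝ) < Real.log 2 := Real.log_pos one_lt_two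
  -- CDF measurability
  have hFeM : Measurable fun x : ℝ => (P {ω | γe ω ≤ x}).toReal := by
    apply Monotone.measurable
    intro x y hxy
    exact ENNReal.toReal_mono (measure_ne_top _ _)
      (measure_mono fun ω h => le_trans h hxy)
  have hFsM : Measurable fun x : ℝ => (P {ω | γs ω ≤ x}).toReal := by
    apply Monotone.measurable
    intro x y hxy
    exact ENNReal.toReal_mono (measure_ne_top _ _)
      (measure_mono fun ω h => le_trans h hxy)
  -- step 1: rewrite logb as (1/log 2) * Δlog pointwise
  have hpt : ∀ ω, max 0 (Real.logb 2 ((1 + γs ω) / (1 + γe ω)))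
      = (1 / Real.log 2) *
        max 0 (Real.log (1 + γs ω) - Real.log (1 + γe ω)) := by
    intro ω
    have hs1 : (0:ℝ) < 1 + γs ω := by have := hγs0 ω; linarith
    have he1 : (0:ℝ) < 1 + γe ω := by have := hγe0 ω; linarith
    rw [Real.logb, Real.log_div hs1.ne' he1.ne',
      mul_max_of_nonneg _ _ (by positivity : (0:ℝ) ≤ 1 / Real.log 2)]
    rw [mul_zero]
    ring_nf
  simp only [hpt]
  rw [integral_const_mul]
  congr 1
  -- key lintegral identity
  set M : Set (Ω × ℝ) := {p : Ω × ℝ | γe p.1 ≤ p.2 ∧ p.2 < γs p.1} with hM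
  have hMmeas : MeasurableSet M :=
    (measurableSet_le (hγe.comp measurable_fst) measurable_snd).inter
      (measurableSet_lt measurable_snd (hγs.comp measurable_fst))
  set F : Ω × ℝ → ENNReal :=
    M.indicator (fun p => ENNReal.ofReal (1/(1+p.2))) with hF
  have hFmeas : Measurable F := by
    apply Measurable.indicator _ hMmeas
    exact ENNReal.measurable_ofReal.comp
      (measurable_const.div (measurable_const.add measurable_snd))
  have key : ∫⁻ ω, ENNReal.ofReal
        (max 0 (Real.log (1 + γs ω) - Real.log (1 + γe ω))) ∂P
      = ∫⁻ x in Set.Ioi (0:ℝ), ENNReal.ofReal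
          ((P {ω | γe ω ≤ x}).toReal * (1 - (P {ω | γs ω ≤ x}).toReal) / (1 + x)) := by
    have step1 : ∫⁻ ω, ENNReal.ofReal
          (max 0 (Real.log (1 + γs ω) - Real.log (1 + γe ω))) ∂P
        = ∫⁻ ω, (∫⁻ x in Set.Ioi (0:ℝ), F (ω, x)) ∂P := by
      refine lintegral_congr fun ω => ?_
      have heq : (fun x => F (ω, x))
          = (Set.Ico (γe ω) (γs ω)).indicator (fun x => ENNReal.ofReal (1/(1+x))) := by
        funext x
        simp [hF, hM, Set.indicator_apply, Set.mem_Ico]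
      rw [show (∫⁻ x in Set.Ioi (0:ℝ), F (ω, x)) = ∫⁻ x in Set.Ioi (0:ℝ),
          (Set.Ico (γe ω) (γs ω)).indicator (fun x => ENNReal.ofReal (1/(1+x))) x
          from by rw [← heq],
        pointwise_lintegral _ _ (hγe0 ω) (hγs0 ω)]
    have hswap := lintegral_lintegral_swap (μ := P)
      (ν := volume.restrict (Set.Ioi 0)) (f := fun ω x => F (ω, x))
      (by exact hFmeas.aemeasurable)
    rw [step1, hswap]
    refine setLIntegral_congr_fun measurableSet_Ioi (fun x hx => ?_)
    have hx0 : (0:ℝ) < x := hx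
    -- inner integral
    have heq2 : (fun ω => F (ω, x))
        = ({ω | γe ω ≤ x} ∩ {ω | x < γs ω}).indicator
            (fun _ => ENNReal.ofReal (1/(1+x))) := by
      funext ω
      simp [hF, hM, Set.indicator_apply]
    rw [heq2, lintegral_indicator_const
      (show MeasurableSet ({ω | γe ω ≤ x} ∩ {ω | x < γs ω}) from
        (hγe measurableSet_Iic).inter (hγs measurableSet_Ioi))]
    have hsets : ({ω | γe ω ≤ x} ∩ {ω | x < γs ω})
        = γs ⁻¹' Set.Ioi x ∩ γe ⁻¹' Set.Iic x := by
      ext ω; simp [and_comm]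
    rw [hsets, hindep.measure_inter_preimage_eq_mul _ _ measurableSet_Ioi
      measurableSet_Iic]
    have hcompl : γs ⁻¹' Set.Ioi x = {ω | γs ω ≤ x}ᶜ := by
      ext ω; simp [not_le]
    rw [hcompl, prob_compl_eq_one_sub (show MeasurableSet {ω | γs ω ≤ x} from hγs measurableSet_Iic)]
    have ha : P {ω | γe ω ≤ x} = ENNReal.ofReal (P {ω | γe ω ≤ x}).toReal :=
      (ENNReal.ofReal_toReal (measure_ne_top _ _)).symm
    have hb : (1 : ENNReal) - P {ω | γs ω ≤ x}
        = ENNReal.ofReal (1 - (P {ω | γs ω ≤ x}).toReal) := by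
      rw [ENNReal.ofReal_sub _ ENNReal.toReal_nonneg, ENNReal.ofReal_one,
        ENNReal.ofReal_toReal (measure_ne_top _ _)]
    have hFs1 : (P {ω | γs ω ≤ x}).toReal ≤ 1 := by
      have := prob_le_one (μ := P) (s := {ω | γs ω ≤ x})
      calc (P {ω | γs ω ≤ x}).toReal ≤ (1:ENNReal).toReal :=
            ENNReal.toReal_mono ENNReal.one_ne_top this
        _ = 1 := by simp
    have h1x : (0:ℝ) < 1 + x := by linarith
    rw [hb, show P (γe ⁻¹' Set.Iic x) = P {ω | γe ω ≤ x} from rfl]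
    nth_rewrite 1 [ha]
    rw [← ENNReal.ofReal_mul (p := 1 - (P {ω | γs ω ≤ x}).toReal) (by linarith),
      ← ENNReal.ofReal_mul (p := 1/(1+x)) (div_nonneg zero_le_one h1x.le)]
    congr 1
    field_simp
  -- convert both real integrals to lintegrals
  have hL : ∫ ω, max 0 (Real.log (1 + γs ω) - Real.log (1 + γe ω)) ∂P
      = (∫⁻ ω, ENNReal.ofReal
          (max 0 (Real.log (1 + γs ω) - Real.log (1 + γe ω))) ∂P).toReal :=
    integral_eq_lintegral_of_nonneg_ae (ae_of_all _ fun ω => le_max_left _ _)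
      (Measurable.aestronglyMeasurable
        (measurable_const.max
          ((Real.measurable_log.comp (measurable_const.add hγs)).sub
            (Real.measurable_log.comp (measurable_const.add hγe)))))
  have hR : ∫ x in Set.Ioi (0:ℝ),
        (P {ω | γe ω ≤ x}).toReal * (1 - (P {ω | γs ω ≤ x}).toReal) / (1 + x)
      = (∫⁻ x in Set.Ioi (0:ℝ), ENNReal.ofReal
          ((P {ω | γe ω ≤ x}).toReal * (1 - (P {ω | γs ω ≤ x}).toReal) / (1 + x))).toReal :=
    integral_eq_lintegral_of_nonneg_ae
      ((ae_restrict_iff' measurableSet_Ioi).2 (ae_of_all _ fun x hx => by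
        have hx0 : (0:ℝ) < x := hx
        have h1 : (0:ℝ) ≤ (P {ω | γe ω ≤ x}).toReal := ENNReal.toReal_nonneg
        have h2 : (P {ω | γs ω ≤ x}).toReal ≤ 1 := by
          have := prob_le_one (μ := P) (s := {ω | γs ω ≤ x})
          calc (P {ω | γs ω ≤ x}).toReal ≤ (1:ENNReal).toReal :=
                ENNReal.toReal_mono ENNReal.one_ne_top this
            _ = 1 := by simp
        have h3 : (0:ℝ) < 1 + x := by linarith
        exact div_nonneg (mul_nonneg h1 (by linarith)) h3.le))
      (Measurable.aestronglyMeasurable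
        ((hFeM.mul (measurable_const.sub hFsM)).div
          (measurable_const.add measurable_id)))
  rw [hL, hR, key]
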